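/- The function f₀(x) = e^{−x} on ℝ₊ majorizes f_b(x) = x e^{−x} on ℝ₊ in the continuous sense. -/

import Mathlib

open MeasureTheory Set Real

lemma intexp : ∫ x in Ici (0:ℝ), exp (-x) = 1 := by
  rw [integral_Ici_eq_integral_Ioi, integral_exp_neg_Ioi_zero]

lemma intexpOn : IntegrableOn (fun y : ℝ => exp (-y)) (Ici 0) := by
  rw [integrableOn_Ici_iff_integrableOn_Ioi]
  simpa using exp_neg_integrableOn_Ioi 0 one_pos

lemma intxexp : ∫ x in Ici (0:ℝ), x * exp (-x) = 1 := by
  have h := Real.Gamma_eq_integral (by norm_num : (0:ℝ) < 2)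
  rw [Real.Gamma_two] at h
  rw [integral_Ici_eq_integral_Ioi, h]
  refine setIntegral_congr_fun measurableSet_Ioi fun x hx => ?_
  rw [show (2:ℝ) - 1 = 1 by norm_num, rpow_one]
  ring

lemma Fint (t : ℝ) (ht : 0 ≤ t) (x : ℝ) :
    Integrable (fun y => exp (-y) * max ((if y ≤ x then exp (y - x) else 0) - t) 0)
      (volume.restrict (Ici 0)) := by
  set h : ℝ → ℝ := fun y => if y ≤ x then exp (y - x) else 0 with hh
  have hmeas : Measurable fun y => exp (-y) * max (h y - t) 0 := by
    apply (measurable_neg.exp).mul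
    apply Measurable.max _ measurable_const
    apply Measurable.sub _ measurable_const
    exact Measurable.ite measurableSet_Iic (by fun_prop) measurable_const
  have hnn : ∀ y, 0 ≤ exp (-y) * max (h y - t) 0 :=
    fun y => mul_nonneg (exp_pos _).le (le_max_right _ _)
  have hb : ∀ y, ‖exp (-y) * max (h y - t) 0‖ ≤ ‖exp (-y)‖ := by
    intro y
    rw [Real.norm_eq_abs, Real.norm_eq_abs, abs_of_nonneg (hnn y), abs_of_nonneg (exp_pos _).le]
    have h1 : h y ≤ 1 := by
      simp only [hh]; split
      · exact exp_le_one_iff.mpr (by linarith [‹y ≤ x›])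
      · norm_num
    have : max (h y - t) 0 ≤ 1 := max_le (by linarith) zero_le_one
    nlinarith [exp_pos (-y), (hnn y)]
  exact Integrable.mono intexpOn hmeas.aestronglyMeasurable (Filter.Eventually.of_forall hb)

lemma keyA (t : ℝ) (ht : 0 ≤ t) (x : ℝ) (hx : 0 ≤ x) :
    max (x * exp (-x) - t) 0 ≤
      ∫ y in Ici (0:ℝ), exp (-y) * max ((if y ≤ x then exp (y - x) else 0) - t) 0 := by
  set h : ℝ → ℝ := fun y => if y ≤ x then exp (y - x) else 0 with hh
  have hnn : ∀ y, 0 ≤ exp (-y) * max (h y - t) 0 :=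
    fun y => mul_nonneg (exp_pos _).le (le_max_right _ _)
  have hint1 := Fint t ht x
  have heq : ∀ y, exp (-y) * h y = (Iic x).indicator (fun _ => exp (-x)) y := by
    intro y
    simp only [hh, indicator, mem_Iic]
    split
    · rw [← exp_add]; ring_nf
    · ring
  have hindint : Integrable ((Iic x).indicator (fun _ => exp (-x))) (volume.restrict (Ici 0)) := by
    rw [integrable_indicator_iff measurableSet_Iic]
    unfold IntegrableOn
    rw [Measure.restrict_restrict measurableSet_Iic]
    apply (integrableOn_const_iff).mpr
    right
    calc volume (Iic x ∩ Ici 0) ≤ volume (Icc 0 x) := by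
          apply measure_mono; intro y hy; exact ⟨hy.2, hy.1⟩
      _ < ⊤ := by rw [Real.volume_Icc]; exact ENNReal.ofReal_lt_top
  have hint2 : Integrable (fun y => exp (-y) * h y - t * exp (-y)) (volume.restrict (Ici 0)) := by
    apply Integrable.sub
    · simpa only [funext heq] using hindint
    · exact intexpOn.const_mul t
  apply max_le _ (integral_nonneg hnn)
  have hcalc : ∫ y in Ici (0:ℝ), (exp (-y) * h y - t * exp (-y)) = x * exp (-x) - t := by
    rw [integral_sub (by simpa only [funext heq] using hindint) (intexpOn.const_mul t)]
    have e1 : ∫ y in Ici (0:ℝ), exp (-y) * h y = x * exp (-x) := by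
      simp only [funext heq]
      rw [setIntegral_indicator measurableSet_Iic, setIntegral_const]
      rw [Set.Ici_inter_Iic, measureReal_def, Real.volume_Icc, smul_eq_mul]
      rw [ENNReal.toReal_ofReal (by linarith)]
      ring
    have e2 : ∫ y in Ici (0:ℝ), t * exp (-y) = t := by
      rw [MeasureTheory.integral_const_mul, intexp, mul_one]
    rw [e1, e2]
  rw [← hcalc]
  apply integral_mono hint2 hint1
  intro y
  have : exp (-y) * h y - t * exp (-y) = exp (-y) * (h y - t) := by ring
  simp only
  rw [this]
  exact mul_le_mul_of_nonneg_left (le_max_left _ _) (exp_pos _).le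

noncomputable def Phi (t : ℝ) : ℝ → ENNReal := fun u => ENNReal.ofReal (max (exp (-u) - t) 0)

lemma Phi_meas (t : ℝ) : Measurable (Phi t) := by
  apply ENNReal.measurable_ofReal.comp
  exact ((measurable_neg.exp).sub measurable_const).max measurable_const

/-- translation invariance -/
lemma keyC (t : ℝ) (ht : 0 ≤ t) (y : ℝ) (hy : 0 ≤ y) :
    ∫⁻ x in Ici (0:ℝ), ENNReal.ofReal (max ((if y ≤ x then exp (y - x) else 0) - t) 0)
      = ∫⁻ x in Ici (0:ℝ), Phi t x := by
  set I : ℝ → ENNReal := (Ici (0:ℝ)).indicator (Phi t) with hI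
  have key : ∀ x : ℝ, (Ici (0:ℝ)).indicator
      (fun x => ENNReal.ofReal (max ((if y ≤ x then exp (y - x) else 0) - t) 0)) x
      = I (x + -y) := by
    intro x
    simp only [hI, indicator, mem_Ici, Phi]
    by_cases h1 : 0 ≤ x
    · by_cases h2 : y ≤ x
      · rw [if_pos h1, if_pos h2, if_pos (by linarith)]
        rw [show -(x + -y) = y - x by ring]
      · rw [if_pos h1, if_neg h2, if_neg (by intro h; apply h2; linarith)]
        rw [max_eq_right (by linarith), ENNReal.ofReal_zero]
    · rw [if_neg h1, if_neg (by intro h; apply h1; linarith)]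
  rw [← lintegral_indicator measurableSet_Ici, ← lintegral_indicator measurableSet_Ici]
  calc ∫⁻ x, (Ici (0:ℝ)).indicator
        (fun x => ENNReal.ofReal (max ((if y ≤ x then exp (y - x) else 0) - t) 0)) x
      = ∫⁻ x, I (x + -y) := by simp_rw [key]
    _ = ∫⁻ x, I x := lintegral_add_right_eq_self I (-y)

lemma Fmeas (t : ℝ) : Measurable (fun p : ℝ × ℝ =>
    ENNReal.ofReal (exp (-p.2) * max ((if p.2 ≤ p.1 then exp (p.2 - p.1) else 0) - t) 0)) := by
  apply ENNReal.measurable_ofReal.comp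
  apply Measurable.mul (by fun_prop)
  apply Measurable.max _ measurable_const
  apply Measurable.sub _ measurable_const
  exact Measurable.ite (measurableSet_le measurable_snd measurable_fst) (by fun_prop)
    measurable_const

lemma lint_exp : ∫⁻ y in Ici (0:ℝ), ENNReal.ofReal (exp (-y)) = 1 := by
  rw [← ofReal_integral_eq_lintegral_ofReal intexpOn
    (Filter.Eventually.of_forall fun y => (exp_pos (-y)).le), intexp, ENNReal.ofReal_one]

/-- main lintegral inequality -/
lemma keyMain (t : ℝ) (ht : 0 ≤ t) :
    ∫⁻ x in Ici (0:ℝ), ENNReal.ofReal (max (x * exp (-x) - t) 0)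
      ≤ ∫⁻ x in Ici (0:ℝ), Phi t x := by
  set N := ∫⁻ x in Ici (0:ℝ), Phi t x with hN
  calc ∫⁻ x in Ici (0:ℝ), ENNReal.ofReal (max (x * exp (-x) - t) 0)
      ≤ ∫⁻ x in Ici (0:ℝ), ∫⁻ y in Ici (0:ℝ),
          ENNReal.ofReal (exp (-y) * max ((if y ≤ x then exp (y - x) else 0) - t) 0) := by
        apply lintegral_mono_ae
        refine (ae_restrict_iff' measurableSet_Ici).mpr (Filter.Eventually.of_forall fun x hx => ?_)
        calc ENNReal.ofReal (max (x * exp (-x) - t) 0)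
            ≤ ENNReal.ofReal (∫ y in Ici (0:ℝ),
                exp (-y) * max ((if y ≤ x then exp (y - x) else 0) - t) 0) :=
              ENNReal.ofReal_le_ofReal (keyA t ht x hx)
          _ = _ := ofReal_integral_eq_lintegral_ofReal (Fint t ht x)
              (Filter.Eventually.of_forall fun y =>
                mul_nonneg (exp_pos _).le (le_max_right _ _))
    _ = ∫⁻ y in Ici (0:ℝ), ∫⁻ x in Ici (0:ℝ),
          ENNReal.ofReal (exp (-y) * max ((if y ≤ x then exp (y - x) else 0) - t) 0) := by
        exact lintegral_lintegral_swap (Fmeas t).aemeasurable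
    _ = ∫⁻ y in Ici (0:ℝ), ENNReal.ofReal (exp (-y)) * N := by
        refine setLIntegral_congr_fun measurableSet_Ici (fun y hy => ?_)
        have : ∀ x : ℝ, ENNReal.ofReal (exp (-y) * max ((if y ≤ x then exp (y - x) else 0) - t) 0)
            = ENNReal.ofReal (exp (-y)) *
              ENNReal.ofReal (max ((if y ≤ x then exp (y - x) else 0) - t) 0) := fun x =>
          ENNReal.ofReal_mul (exp_pos _).le
        simp_rw [this]
        rw [lintegral_const_mul _ (by
          apply ENNReal.measurable_ofReal.comp
          apply Measurable.max _ measurable_const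
          apply Measurable.sub _ measurable_const
          exact Measurable.ite measurableSet_Ici (by fun_prop) measurable_const)]
        rw [keyC t ht y hy]
    _ = N := by
        rw [lintegral_mul_const _ (by fun_prop), lint_exp, one_mul]

/-- `f₀(x) = e^{−x}` majorizes `f_b(x) = x e^{−x}` on ℝ₊. -/
theorem f0_majorizes_fb :
    (∀ t : ℝ, 0 ≤ t →
      ∫ x in Ici (0:ℝ), max (x * exp (-x) - t) 0 ≤
        ∫ x in Ici (0:ℝ), max (exp (-x) - t) 0) ∧
    ∫ x in Ici (0:ℝ), x * exp (-x) = ∫ x in Ici (0:ℝ), exp (-x) := by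
  constructor
  · intro t ht
    have hmeas1 : Measurable fun x : ℝ => max (x * exp (-x) - t) 0 :=
      ((measurable_id.mul (measurable_neg.exp)).sub measurable_const).max measurable_const
    have hmeas2 : Measurable fun x : ℝ => max (exp (-x) - t) 0 :=
      ((measurable_neg.exp).sub measurable_const).max measurable_const
    have hNfin : (∫⁻ x in Ici (0:ℝ), Phi t x) ≠ ⊤ := by
      apply ne_top_of_le_ne_top (b := ∫⁻ x in Ici (0:ℝ), ENNReal.ofReal (exp (-x)))
      · rw [lint_exp]; exact ENNReal.one_ne_top
      · apply lintegral_mono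
        intro x
        exact ENNReal.ofReal_le_ofReal (max_le (by linarith [exp_pos (-x)]) (exp_pos _).le)
    have e1 := integral_eq_lintegral_of_nonneg_ae (μ := volume.restrict (Ici 0))
        (f := fun x : ℝ => max (x * exp (-x) - t) 0)
        (Filter.Eventually.of_forall fun x => le_max_right _ _) hmeas1.aestronglyMeasurable
    have e2 := integral_eq_lintegral_of_nonneg_ae (μ := volume.restrict (Ici 0))
        (f := fun x : ℝ => max (exp (-x) - t) 0)
        (Filter.Eventually.of_forall fun x => le_max_right _ _) hmeas2.aestronglyMeasurable
    rw [e1, e2]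
    exact ENNReal.toReal_mono hNfin (keyMain t ht)
  · rw [intexp, intxexp]
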